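/- For bounded measurable functions f, g on a probability space, the standard deviation satisfies the Leibniz inequality: σ(f·g) ≤ σ(f)·‖g‖∞ + ‖f‖∞·σ(g), where σ(f) = ‖f − ∫f dμ‖_{L²(μ)} and ‖·‖∞ is the essential supremum norm. -/

import Mathlib

open MeasureTheory

private lemma eLpNorm_two_mono {X : Type*} [MeasurableSpace X] {μ : Measure X} {u v : X → ℝ}
    (h : ∫⁻ x, (‖u x‖₊ : ENNReal) ^ 2 ∂μ ≤ ∫⁻ x, (‖v x‖₊ : ENNReal) ^ 2 ∂μ) :
    eLpNorm u 2 μ ≤ eLpNorm v 2 μ := by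
  rw [eLpNorm_eq_lintegral_rpow_enorm_toReal two_ne_zero ENNReal.ofNat_ne_top,
    eLpNorm_eq_lintegral_rpow_enorm_toReal two_ne_zero ENNReal.ofNat_ne_top]
  simp only [ENNReal.toReal_ofNat]
  simp only [ENNReal.toReal_ofNat, ENNReal.rpow_two]
  exact ENNReal.rpow_le_rpow h (by norm_num)

private lemma eLpNorm_sub_integral_le {X : Type*} [MeasurableSpace X] {μ : Measure X}
    [IsProbabilityMeasure μ] {h : X → ℝ} (hh : MemLp h 2 μ) (c : ℝ) :
    eLpNorm (fun x => h x - ∫ y, h y ∂μ) 2 μ ≤ eLpNorm (fun x => h x - c) 2 μ := by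
  set k : X → ℝ := fun x => h x - c with hk
  have hki : Integrable h μ := hh.integrable (by norm_num)
  have hkint : ∫ y, k y ∂μ = (∫ y, h y ∂μ) - c := by
    simp [hk, integral_sub hki (integrable_const c)]
  have hkm : AEStronglyMeasurable k μ := hh.aestronglyMeasurable.sub aestronglyMeasurable_const
  have heq : (fun x => h x - ∫ y, h y ∂μ) = fun x => k x - ∫ y, k y ∂μ := by
    funext x; rw [hkint]; simp only [hk]; ring
  rw [heq]
  apply eLpNorm_two_mono
  calc ∫⁻ x, (‖k x - ∫ y, k y ∂μ‖₊ : ENNReal) ^ 2 ∂μ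
      = ProbabilityTheory.evariance k μ := rfl
    _ ≤ ∫⁻ x, (‖k x‖₊ : ENNReal) ^ 2 ∂μ := by
        rw [ProbabilityTheory.evariance_def' hkm]
        exact tsub_le_self

/-- Standard deviation is a Leibniz seminorm on bounded measurable functions
on a probability space: σ(fg) ≤ σ(f)‖g‖∞ + ‖f‖∞σ(g). -/
theorem stdDev_leibniz {X : Type*} [MeasurableSpace X] (μ : Measure X)
    [IsProbabilityMeasure μ] (f g : X → ℝ) (hf : Measurable f) (hg : Measurable g)
    (hfb : eLpNorm f ⊤ μ ≠ ⊤) (hgb : eLpNorm g ⊤ μ ≠ ⊤) :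
    eLpNorm (fun x => f x * g x - ∫ y, f y * g y ∂μ) 2 μ ≤
      eLpNorm (fun x => f x - ∫ y, f y ∂μ) 2 μ * eLpNorm g ⊤ μ +
        eLpNorm f ⊤ μ * eLpNorm (fun x => g x - ∫ y, g y ∂μ) 2 μ := by
  set a := ∫ y, f y ∂μ
  set b := ∫ y, g y ∂μ
  have hfinf : MemLp f ⊤ μ := ⟨hf.aestronglyMeasurable, hfb.lt_top⟩
  have hginf : MemLp g ⊤ μ := ⟨hg.aestronglyMeasurable, hgb.lt_top⟩
  have hf2 : MemLp f 2 μ := hfinf.mono_exponent le_top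
  have hg2 : MemLp g 2 μ := hginf.mono_exponent le_top
  have hfg2 : MemLp (fun x => f x * g x) 2 μ := by
    have := hg2.smul (𝕜 := ℝ) hfinf (r := 2)
    exact this
  have step1 : eLpNorm (fun x => f x * g x - ∫ y, f y * g y ∂μ) 2 μ ≤
      eLpNorm (fun x => f x * g x - a * b) 2 μ := eLpNorm_sub_integral_le hfg2 (a * b)
  have hsplit : (fun x => f x * g x - a * b) =
      (fun x => (f x - a) * g x) + fun x => a * (g x - b) := by
    funext x; simp; ring
  have hm1 : AEStronglyMeasurable (fun x => (f x - a) * g x) μ :=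
    (hf.sub measurable_const).mul hg |>.aestronglyMeasurable
  have hm2 : AEStronglyMeasurable (fun x => a * (g x - b)) μ :=
    (measurable_const.mul (hg.sub measurable_const)).aestronglyMeasurable
  have step2 : eLpNorm (fun x => f x * g x - a * b) 2 μ ≤
      eLpNorm (fun x => (f x - a) * g x) 2 μ + eLpNorm (fun x => a * (g x - b)) 2 μ := by
    rw [hsplit]
    exact eLpNorm_add_le hm1 hm2 (by norm_num)
  have step3 : eLpNorm (fun x => (f x - a) * g x) 2 μ ≤
      eLpNorm (fun x => f x - a) 2 μ * eLpNorm g ⊤ μ := by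
    refine le_of_le_of_eq (eLpNorm_le_eLpNorm_mul_eLpNorm_top 2 ?_ g (· * ·) 1 ?_) (by simp)
    · exact (hf.sub measurable_const).aestronglyMeasurable
    · filter_upwards with x
      simp [nnnorm_mul]
  have ha : (‖a‖₊ : ENNReal) ≤ eLpNorm f ⊤ μ := by
    calc (‖a‖₊ : ENNReal) ≤ ∫⁻ x, ‖f x‖₊ ∂μ := enorm_integral_le_lintegral_enorm f
      _ = eLpNorm f 1 μ := (eLpNorm_one_eq_lintegral_enorm (f := f)).symm
      _ ≤ eLpNorm f ⊤ μ := eLpNorm_le_eLpNorm_of_exponent_le le_top hf.aestronglyMeasurable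
  have step4 : eLpNorm (fun x => a * (g x - b)) 2 μ ≤
      eLpNorm f ⊤ μ * eLpNorm (fun x => g x - b) 2 μ := by
    have : eLpNorm (fun x => a * (g x - b)) 2 μ = ‖a‖₊ * eLpNorm (fun x => g x - b) 2 μ := by
      exact eLpNorm_const_smul (𝕜 := ℝ) a (fun x => g x - b) 2 μ
    rw [this]
    exact mul_le_mul_left ha _
  calc eLpNorm (fun x => f x * g x - ∫ y, f y * g y ∂μ) 2 μ
      ≤ eLpNorm (fun x => f x * g x - a * b) 2 μ := step1
    _ ≤ eLpNorm (fun x => (f x - a) * g x) 2 μ + eLpNorm (fun x => a * (g x - b)) 2 μ := step2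
    _ ≤ eLpNorm (fun x => f x - a) 2 μ * eLpNorm g ⊤ μ +
        eLpNorm f ⊤ μ * eLpNorm (fun x => g x - b) 2 μ := add_le_add step3 step4
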